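/- (Correctness of the Moreau projection for the squared ℓ₁-norm.) Let λ > 0 and x ∈ ℝ^p with x ≠ 0. Let y ∈ ℝ^p be the vector of absolute values |x_i| sorted in decreasing order, y₁ ≥ ⋯ ≥ y_p. Define ρ = max{ j ∈ {1, …, p} : y_j − (λ/(1 + jλ))·Σ_{r=1}^j y_r > 0 } and τ = (λ/(1 + ρλ))·Σ_{r=1}^ρ y_r. Then prox_{(λ/2)‖·‖₁²}(x) = soft(x, τ), i.e., the unique minimizer z of (1/2)‖z − x‖² + (λ/2)(Σ_{i=1}^p |z_i|)² satisfies z_i = sign(x_i)·max{0, |x_i| − τ} for every i. -/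

import Mathlib

lemma coord_ineq (τ xi vi : ℝ) (hτ : 0 ≤ τ) :
    0 ≤ (Real.sign xi * max 0 (|xi| - τ) - xi) * (vi - Real.sign xi * max 0 (|xi| - τ))
      + τ * (|vi| - |Real.sign xi * max 0 (|xi| - τ)|) := by
  rcases le_or_gt |xi| τ with h | h
  · have h0 : max 0 (|xi| - τ) = 0 := max_eq_left (by linarith)
    rw [h0, mul_zero, abs_zero, sub_zero, sub_zero, zero_sub]
    have h1 : xi * vi ≤ |xi| * |vi| := by
      calc xi * vi ≤ |xi * vi| := le_abs_self _
        _ = |xi| * |vi| := abs_mul _ _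
    nlinarith [abs_nonneg vi]
  · have h0 : max 0 (|xi| - τ) = |xi| - τ := max_eq_right (by linarith)
    rw [h0]
    rcases lt_trichotomy xi 0 with hx | hx | hx
    · rw [Real.sign_of_neg hx, abs_of_neg hx]
      rw [abs_of_neg hx] at h
      have : |(-1 : ℝ) * (-xi - τ)| = -xi - τ := by
        rw [abs_mul, abs_neg, abs_one, one_mul, abs_of_nonneg (by linarith)]
      rw [this]
      nlinarith [neg_abs_le vi]
    · subst hx; simp at h; linarith
    · rw [Real.sign_of_pos hx, abs_of_pos hx]
      rw [abs_of_pos hx] at h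
      have : |(1 : ℝ) * (xi - τ)| = xi - τ := by
        rw [one_mul, abs_of_nonneg (by linarith)]
      rw [this]
      nlinarith [le_abs_self vi]

lemma abs_soft (τ xi : ℝ) (hτ : 0 ≤ τ) :
    |Real.sign xi * max 0 (|xi| - τ)| = max 0 (|xi| - τ) := by
  rcases le_or_gt |xi| τ with h | h
  · rw [max_eq_left (by linarith)]; simp
  · rw [max_eq_right (by linarith), abs_mul]
    have hx0 : xi ≠ 0 := by
      intro h0; rw [h0, abs_zero] at h; linarith
    rcases lt_or_gt_of_ne hx0 with hx | hx
    · rw [Real.sign_of_neg hx, abs_neg, abs_one, one_mul]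
      exact abs_of_nonneg (by linarith)
    · rw [Real.sign_of_pos hx, abs_one, one_mul]
      exact abs_of_nonneg (by linarith)


noncomputable section

/-- The prox objective for the squared `ℓ₁`-norm:
`(1/2)‖z − x‖² + (λ/2)(Σᵢ |zᵢ|)²`, the Euclidean norm written as a sum of
squares of the coordinates. -/
def sqL1Obj {p : ℕ} (lam : ℝ) (x z : Fin p → ℝ) : ℝ :=
  (1 / 2) * (∑ i, (z i - x i) ^ 2) + lam / 2 * (∑ i, |z i|) ^ 2

/-- The split-index condition for index `j` (under the sorting permutation `π`
of the absolute values `y_{(j)} = |x_{(j)}|`, with `j`-th prefix of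
cardinality `(Iic j).card = j + 1`):
`y_j − (λ/(1 + jλ)) Σ_{r=1}^j y_r > 0` (`1`-indexed in the paper). -/
def sqL1SplitCond {p : ℕ} (lam : ℝ) (x : Fin p → ℝ) (π : Equiv.Perm (Fin p))
    (j : Fin p) : Prop :=
  lam / (1 + (Finset.Iic j).card * lam) * (∑ r ∈ Finset.Iic j, |x (π r)|) < |x (π j)|

/-- correctness of the Moreau projection for the squared
`ℓ₁`-norm: with `x ≠ 0`, the absolute values of `x` sorted decreasingly by the
permutation `π`, `ρ` the largest index satisfying the split condition, and
`τ = (λ/(1 + ρλ)) Σ_{r=1}^ρ y_r`, the unique minimizer `z` of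
`(1/2)‖z − x‖² + (λ/2)‖z‖₁²` is the soft-thresholding
`z_i = sign(x_i)·max{0, |x_i| − τ}`. -/
theorem sq_l1_prox_soft_threshold {p : ℕ} (lam : ℝ) (hlam : 0 < lam)
    (x : Fin p → ℝ) (hx : x ≠ 0)
    (π : Equiv.Perm (Fin p))
    (hsort : ∀ i j : Fin p, i ≤ j → |x (π j)| ≤ |x (π i)|)
    (ρ : Fin p) (hρ : sqL1SplitCond lam x π ρ)
    (hρmax : ∀ j : Fin p, sqL1SplitCond lam x π j → j ≤ ρ)
    (τ : ℝ)
    (hτ : τ = lam / (1 + (Finset.Iic ρ).card * lam) * (∑ r ∈ Finset.Iic ρ, |x (π r)|))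
    (z : Fin p → ℝ)
    (hmin : ∀ w : Fin p → ℝ, sqL1Obj lam x z ≤ sqL1Obj lam x w) :
    ∀ i : Fin p, z i = Real.sign (x i) * max 0 (|x i| - τ) := by
  have hpos : ∀ n : ℕ, (0:ℝ) < 1 + (n:ℝ) * lam := by
    intro n
    have := mul_nonneg (Nat.cast_nonneg (α := ℝ) n) hlam.le
    linarith
  have hτ0 : 0 ≤ τ := by
    rw [hτ]
    apply mul_nonneg
    · apply div_nonneg hlam.le
      have := hpos (Finset.Iic ρ).card
      linarith
    · exact Finset.sum_nonneg fun r _ => abs_nonneg _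
  -- τ < |x (π j)| for j ≤ ρ
  have hbig : ∀ j : Fin p, j ≤ ρ → τ < |x (π j)| := by
    intro j hj
    have h1 : τ < |x (π ρ)| := by rw [hτ]; exact hρ
    exact lt_of_lt_of_le h1 (hsort j ρ hj)
  -- key equality for τ
  have hτeq : τ * (1 + ((ρ.val + 1 : ℕ) : ℝ) * lam) = lam * ∑ r ∈ Finset.Iic ρ, |x (π r)| := by
    rw [hτ, Fin.card_Iic]
    have h := hpos (ρ.val + 1)
    field_simp
  -- |x (π j)| ≤ τ for ρ < j, by induction
  have main : ∀ n : ℕ, ∀ hn : ρ.val + n < p,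
      lam * (∑ r ∈ Finset.Iic (⟨ρ.val + n, hn⟩ : Fin p), |x (π r)|)
        ≤ τ * (1 + ((ρ.val + n + 1 : ℕ) : ℝ) * lam)
      ∧ (0 < n → |x (π ⟨ρ.val + n, hn⟩)| ≤ τ) := by
    intro n
    induction n with
    | zero =>
      intro hn
      have hfin : (⟨ρ.val + 0, hn⟩ : Fin p) = ρ := by ext; simp
      rw [hfin]
      refine ⟨?_, by intro h; exact absurd h (by norm_num)⟩
      have hc : ((ρ.val + 0 + 1 : ℕ) : ℝ) = ((ρ.val + 1 : ℕ) : ℝ) := by norm_num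
      rw [hc]
      exact hτeq.symm.le
    | succ n ih =>
      intro hn
      have hn' : ρ.val + n < p := by omega
      obtain ⟨ih1, _⟩ := ih hn'
      set j' : Fin p := ⟨ρ.val + n + 1, by omega⟩ with hj'def
      have hfin2 : (⟨ρ.val + (n+1), hn⟩ : Fin p) = j' := by ext; simp [hj'def]; omega
      rw [hfin2]
      have hnots : ¬ sqL1SplitCond lam x π j' := by
        intro hs
        have h2 := hρmax j' hs
        rw [Fin.le_def] at h2
        simp only [hj'def] at h2
        omega
      unfold sqL1SplitCond at hnots
      push_neg at hnots
      have hins : Finset.Iic j' = insert j' (Finset.Iic (⟨ρ.val + n, hn'⟩ : Fin p)) := by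
        ext r
        simp only [Finset.mem_Iic, Finset.mem_insert, Fin.le_def, Fin.ext_iff, hj'def]
        omega
      have hnotmem : j' ∉ Finset.Iic (⟨ρ.val + n, hn'⟩ : Fin p) := by
        simp [Finset.mem_Iic, Fin.le_def, hj'def]
      rw [hins, Finset.sum_insert hnotmem, Finset.card_insert_of_notMem hnotmem,
        Fin.card_Iic] at hnots
      set S := ∑ r ∈ Finset.Iic (⟨ρ.val + n, hn'⟩ : Fin p), |x (π r)| with hSdef
      simp only [Fin.val_mk] at hnots
      have hp1 : (0:ℝ) < 1 + ((ρ.val:ℝ) + n + 1 + 1) * lam := by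
        have := hpos (ρ.val + n + 1 + 1); push_cast at this; linarith
      have hcpos : (0:ℝ) < 1 + ((ρ.val:ℝ) + n + 1) * lam := by
        have := hpos (ρ.val + n + 1); push_cast at this; linarith
      push_cast at hnots ih1 ⊢
      rw [div_mul_eq_mul_div, le_div_iff₀ hp1] at hnots
      have key1 : |x (π j')| * (1 + ((ρ.val:ℝ) + n + 1) * lam) ≤ lam * S := by nlinarith [hnots]
      have key2 : |x (π j')| * (1 + ((ρ.val:ℝ) + n + 1) * lam) ≤ τ * (1 + ((ρ.val:ℝ) + n + 1) * lam) :=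
        le_trans key1 ih1
      have hYj' : |x (π j')| ≤ τ := (mul_le_mul_iff_of_pos_right hcpos).mp key2
      refine ⟨?_, fun _ => hYj'⟩
      rw [hins, Finset.sum_insert hnotmem, ← hSdef]
      have hmul := mul_le_mul_of_nonneg_left hYj' hlam.le
      nlinarith [ih1, hmul]
  have hsmall : ∀ j : Fin p, ρ < j → |x (π j)| ≤ τ := by
    intro j hj
    have hj2 : ρ.val < j.val := hj
    have h2 := (main (j.val - ρ.val) (by omega)).2 (by omega)
    have hfin : (⟨ρ.val + (j.val - ρ.val), by omega⟩ : Fin p) = j := by ext; simp; omega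
    rwa [hfin] at h2
  -- the soft-threshold candidate
  set w : Fin p → ℝ := fun i => Real.sign (x i) * max 0 (|x i| - τ) with hwdef
  have hB : ∑ i, |w i| = τ / lam := by
    have h1 : ∀ i, |w i| = max 0 (|x i| - τ) := fun i => abs_soft τ (x i) hτ0
    calc ∑ i, |w i| = ∑ i, max 0 (|x i| - τ) := Finset.sum_congr rfl fun i _ => h1 i
      _ = ∑ j, max 0 (|x (π j)| - τ) := (Equiv.sum_comp π fun i => max 0 (|x i| - τ)).symm
      _ = ∑ j ∈ Finset.Iic ρ, max 0 (|x (π j)| - τ) := by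
          refine (Finset.sum_subset (Finset.subset_univ _) ?_).symm
          intro j _ hj
          rw [Finset.mem_Iic] at hj
          have : ρ < j := lt_of_not_ge hj
          exact max_eq_left (by linarith [hsmall j this])
      _ = ∑ j ∈ Finset.Iic ρ, (|x (π j)| - τ) := by
          refine Finset.sum_congr rfl fun j hj => ?_
          rw [Finset.mem_Iic] at hj
          exact max_eq_right (by linarith [hbig j hj])
      _ = (∑ j ∈ Finset.Iic ρ, |x (π j)|) - (ρ.val + 1) * τ := by
          rw [Finset.sum_sub_distrib, Finset.sum_const, Fin.card_Iic]
          push_cast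
          ring
      _ = τ / lam := by
          rw [eq_div_iff hlam.ne']
          push_cast at hτeq
          nlinarith [hτeq]
  -- w is a global minimizer
  have hwmin : ∀ v : Fin p → ℝ, sqL1Obj lam x w ≤ sqL1Obj lam x v := by
    intro v
    have hτB : τ = lam * ∑ i, |w i| := by
      rw [hB]; field_simp
    have hdiff : sqL1Obj lam x v - sqL1Obj lam x w =
        (∑ i, ((w i - x i) * (v i - w i) + τ * (|v i| - |w i|)))
        + (1/2) * ∑ i, (v i - w i)^2
        + lam/2 * ((∑ i, |v i|) - (∑ i, |w i|))^2 := by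
      have e1 : ∑ i, ((w i - x i) * (v i - w i) + τ * (|v i| - |w i|))
          = (∑ i, ((1:ℝ)/2 * (v i - x i)^2 - 1/2 * (w i - x i)^2 - 1/2 * (v i - w i)^2))
            + τ * ((∑ i, |v i|) - (∑ i, |w i|)) := by
        rw [Finset.sum_add_distrib]
        congr 1
        · exact Finset.sum_congr rfl fun i _ => by ring
        · rw [← Finset.mul_sum, Finset.sum_sub_distrib]
      unfold sqL1Obj
      rw [e1, Finset.sum_sub_distrib, Finset.sum_sub_distrib,
        ← Finset.mul_sum, ← Finset.mul_sum, ← Finset.mul_sum]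
      linear_combination ((∑ i, |w i|) - (∑ i, |v i|)) * hτB
    have t1 : 0 ≤ ∑ i, ((w i - x i) * (v i - w i) + τ * (|v i| - |w i|)) :=
      Finset.sum_nonneg fun i _ => coord_ineq τ (x i) (v i) hτ0
    have t2 : 0 ≤ (1/2 : ℝ) * ∑ i, (v i - w i)^2 := by
      apply mul_nonneg (by norm_num)
      exact Finset.sum_nonneg fun i _ => sq_nonneg _
    have t3 : 0 ≤ lam/2 * ((∑ i, |v i|) - (∑ i, |w i|))^2 :=
      mul_nonneg (by linarith) (sq_nonneg _)
    linarith
  -- uniqueness via strict convexity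
  have heq : sqL1Obj lam x z = sqL1Obj lam x w := le_antisymm (hmin w) (hwmin z)
  set m : Fin p → ℝ := fun i => (z i + w i)/2 with hmdef
  have h1 : sqL1Obj lam x m ≤ (sqL1Obj lam x z + sqL1Obj lam x w)/2
      - (1/8) * ∑ i, (z i - w i)^2 := by
    unfold sqL1Obj
    have e1 : ∑ i, (m i - x i)^2
        = (∑ i, (z i - x i)^2)/2 + (∑ i, (w i - x i)^2)/2 - (∑ i, (z i - w i)^2)/4 := by
      have hpt : ∀ i : Fin p, (m i - x i)^2
          = (z i - x i)^2/2 + (w i - x i)^2/2 - (z i - w i)^2/4 := by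
        intro i
        show ((z i + w i)/2 - x i)^2 = _
        ring
      rw [Finset.sum_congr rfl fun i _ => hpt i, Finset.sum_sub_distrib,
        Finset.sum_add_distrib, ← Finset.sum_div, ← Finset.sum_div, ← Finset.sum_div]
    have e2 : ∑ i, |m i| ≤ ((∑ i, |z i|) + ∑ i, |w i|)/2 := by
      rw [← Finset.sum_add_distrib, Finset.sum_div]
      apply Finset.sum_le_sum
      intro i _
      show |(z i + w i)/2| ≤ _
      rw [abs_div, abs_two]
      have := abs_add_le (z i) (w i)
      linarith
    have hmnn : 0 ≤ ∑ i, |m i| := Finset.sum_nonneg fun i _ => abs_nonneg _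
    have e3 : (∑ i, |m i|)^2 ≤ (((∑ i, |z i|) + ∑ i, |w i|)/2)^2 :=
      pow_le_pow_left₀ hmnn e2 2
    rw [e1]
    have hc : lam/2 * (∑ i, |m i|)^2 ≤ lam/2 * (((∑ i, |z i|) + ∑ i, |w i|)/2)^2 :=
      mul_le_mul_of_nonneg_left e3 (by linarith)
    nlinarith [sq_nonneg ((∑ i, |z i|) - ∑ i, |w i|), hc]
  have h2 : sqL1Obj lam x z ≤ sqL1Obj lam x m := hmin m
  have hzero : ∑ i, (z i - w i)^2 ≤ 0 := by
    rw [heq] at h1 h2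
    linarith
  intro i
  have h4 : (z i - w i)^2 ≤ ∑ j, (z j - w j)^2 :=
    Finset.single_le_sum (f := fun j => (z j - w j)^2) (fun j _ => sq_nonneg _)
      (Finset.mem_univ i)
  have h5 : (z i - w i)^2 = 0 := le_antisymm (by linarith) (sq_nonneg _)
  have h6 : z i - w i = 0 := pow_eq_zero_iff (by norm_num) |>.mp h5
  have h7 : z i = w i := by linarith
  rw [h7]
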